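/- Consider T independent Bernoulli(p) trials. The probability that there exists a run of at least v consecutive successes equals Σ_{l=1}^{⌊(T+1)/(v+1)⌋} (−1)^{l+1} [ p + ((T − l v + 1)/l)(1 − p) ] · C(T − l v, l − 1) · p^{l v} (1 − p)^{l−1}. -/

import Mathlib

open MeasureTheory
open scoped ENNReal

/-- The event that `g : Fin T → Bool` contains a run of at least `v` consecutive `true`s. -/
def hasRun (T v : ℕ) : Set (Fin T → Bool) :=
  {g | ∃ t : ℕ, t + v ≤ T ∧ ∀ s : Fin T, t ≤ (s : ℕ) → (s : ℕ) < t + v → g s = true}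

/-- The law of `T` independent Bernoulli(p) trials. -/
noncomputable def bernoulliSeq (T : ℕ) (p : ℝ≥0∞) (hp : p ≤ 1) :
    Measure (Fin T → Bool) :=
  Measure.pi fun _ => (PMF.ofFintype (fun b => cond b p (1 - p)) (by simp [hp])).toMeasure

noncomputable def wt (p : ℝ) {T : ℕ} (g : Fin T → Bool) : ℝ :=
  ∏ i, (if g i then p else 1 - p)

lemma part1 (T : ℕ) (p : ℝ) (hp0 : 0 ≤ p) (hp1 : p ≤ 1) (S : Set (Fin T → Bool))
    [DecidablePred (· ∈ S)] :
    (bernoulliSeq T (ENNReal.ofReal p) (ENNReal.ofReal_le_one.mpr hp1) S).toReal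
      = ∑ g ∈ Finset.univ.filter (· ∈ S), wt p g := by
  set μ := bernoulliSeq T (ENNReal.ofReal p) (ENNReal.ofReal_le_one.mpr hp1) with hμ
  have hsing : ∀ g : Fin T → Bool,
      μ {g} = ∏ i : Fin T, (if g i then ENNReal.ofReal p else 1 - ENNReal.ofReal p) := by
    intro g
    rw [hμ, bernoulliSeq, ← Set.univ_pi_singleton g, Measure.pi_pi]
    refine Finset.prod_congr rfl fun i _ => ?_
    rw [PMF.toMeasure_apply_singleton _ _ (measurableSet_singleton _), PMF.ofFintype_apply]
    cases g i <;> simp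
  have hfin : IsProbabilityMeasure μ := by
    rw [hμ, bernoulliSeq]; infer_instance
  have hset : (↑(Finset.univ.filter (· ∈ S)) : Set (Fin T → Bool)) = S := by
    ext g; simp
  have hS : μ S = ∑ g ∈ Finset.univ.filter (· ∈ S), μ {g} := by
    have h2 := sum_measure_preimage_singleton (μ := μ) (Finset.univ.filter (· ∈ S)) (f := id)
      (fun y _ => by simp [MeasurableSet.singleton])
    simp only [Set.preimage_id] at h2
    conv_lhs => rw [← hset]
    exact h2.symm
  rw [hS, ENNReal.toReal_sum (fun g _ => measure_ne_top μ _)]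
  refine Finset.sum_congr rfl fun g _ => ?_
  rw [hsing, ENNReal.toReal_prod, wt]
  refine Finset.prod_congr rfl fun i _ => ?_
  cases hgi : g i
  · rw [if_neg (by simp), if_neg (by simp),
      ENNReal.toReal_sub_of_le (ENNReal.ofReal_le_one.mpr hp1) (by simp),
      ENNReal.toReal_one, ENNReal.toReal_ofReal hp0]
  · rw [if_pos rfl, if_pos rfl, ENNReal.toReal_ofReal hp0]

def rpB (v B T : ℕ) (g : Fin T → Bool) : Prop :=
  ∃ t : ℕ, t + v ≤ B ∧ ∀ s : Fin T, t ≤ (s : ℕ) → (s : ℕ) < t + v → g s = true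

instance rpB.decidable (v B T : ℕ) (g : Fin T → Bool) : Decidable (rpB v B T g) :=
  decidable_of_iff (∃ t < B + 1, t + v ≤ B ∧ ∀ s : Fin T, t ≤ (s : ℕ) → (s : ℕ) < t + v → g s = true)
    (by
      constructor
      · rintro ⟨t, _, h1, h2⟩; exact ⟨t, h1, h2⟩
      · rintro ⟨t, h1, h2⟩; exact ⟨t, by omega, h1, h2⟩)

noncomputable def runP (p : ℝ) (v T : ℕ) : ℝ :=
  ∑ g : Fin T → Bool, if rpB v T T g then wt p g else 0

lemma sum_wt (p : ℝ) (T : ℕ) : ∑ g : Fin T → Bool, wt p g = 1 := by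
  unfold wt
  have h := Finset.prod_univ_sum (κ := fun _ : Fin T => Bool)
    (fun _ => Finset.univ) (fun _ b => if b then p else 1 - p)
  rw [Fintype.piFinset_univ] at h
  rw [← h]
  simp

lemma wt_append (p : ℝ) {a b : ℕ} (h : Fin a → Bool) (k : Fin b → Bool) :
    wt p (Fin.append h k) = wt p h * wt p k := by
  unfold wt
  rw [Fin.prod_univ_add]
  simp [Fin.append_left, Fin.append_right]

lemma wt_const_true (p : ℝ) (T : ℕ) : wt p (fun _ : Fin T => true) = p ^ T := by
  simp [wt]

lemma wt_const_false (p : ℝ) (T : ℕ) : wt p (fun _ : Fin T => false) = (1 - p) ^ T := by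
  simp [wt]

lemma sum_append {a b : ℕ} (F : (Fin (a + b) → Bool) → ℝ) :
    ∑ g : Fin (a + b) → Bool, F g
      = ∑ h : Fin a → Bool, ∑ k : Fin b → Bool, F (Fin.append h k) := by
  rw [← Fintype.sum_prod_type
    (f := fun hk : (Fin a → Bool) × (Fin b → Bool) => F (Fin.append hk.1 hk.2))]
  refine (Fintype.sum_bijective (fun hk : (Fin a → Bool) × (Fin b → Bool) => Fin.append hk.1 hk.2)
    ⟨?_, ?_⟩ _ _ (fun x => rfl)).symm
  · rintro ⟨h1, k1⟩ ⟨h2, k2⟩ heq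
    have h₁ : h1 = h2 := funext fun i => by
      simpa [Fin.append_left] using congrFun heq (Fin.castAdd b i)
    have h₂ : k1 = k2 := funext fun j => by
      simpa [Fin.append_right] using congrFun heq (Fin.natAdd a j)
    simp [h₁, h₂, Prod.ext_iff]
  · intro g
    exact ⟨(g ∘ Fin.castAdd b, g ∘ Fin.natAdd a), Fin.append_castAdd_natAdd⟩

def castFun {T T' : ℕ} (e : T = T') (g : Fin T → Bool) : Fin T' → Bool :=
  fun s => g (Fin.cast e.symm s)

lemma sum_castFun {T T' : ℕ} (e : T = T') (F : (Fin T' → Bool) → ℝ) :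
    ∑ g : Fin T → Bool, F (castFun e g) = ∑ g' : Fin T' → Bool, F g' := by
  refine Fintype.sum_bijective (castFun e) ⟨?_, ?_⟩ _ _ (fun g => rfl)
  · intro g1 g2 heq
    funext i
    simpa [castFun] using congrFun heq (Fin.cast e i)
  · intro g'
    exact ⟨castFun e.symm g', rfl⟩

lemma wt_castFun (p : ℝ) {T T' : ℕ} (e : T = T') (g : Fin T → Bool) :
    wt p (castFun e g) = wt p g := by
  unfold wt
  exact (Fintype.prod_bijective (Fin.cast e) (finCongr e).bijective _ _ (fun i => rfl)).symm

lemma rpB_castFun {v B T T' : ℕ} (e : T = T') (g : Fin T → Bool) :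
    rpB v B T' (castFun e g) ↔ rpB v B T g := by
  constructor
  · rintro ⟨t, ht, hw⟩
    exact ⟨t, ht, fun s hs1 hs2 => hw (Fin.cast e s) (by simpa) (by simpa)⟩
  · rintro ⟨t, ht, hw⟩
    exact ⟨t, ht, fun s hs1 hs2 => hw (Fin.cast e.symm s) (by simpa) (by simpa)⟩

lemma append_eval_lt {a b : ℕ} (h : Fin a → Bool) (k : Fin b → Bool) (s : Fin (a + b))
    (hs : (s : ℕ) < a) : Fin.append h k s = h ⟨s, hs⟩ := by
  have : s = Fin.castAdd b ⟨(s : ℕ), hs⟩ := by ext; simp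
  conv_lhs => rw [this]
  rw [Fin.append_left]

lemma append_eval_ge {a b : ℕ} (h : Fin a → Bool) (k : Fin b → Bool) (s : Fin (a + b))
    (hs : a ≤ (s : ℕ)) : Fin.append h k s = k ⟨(s : ℕ) - a, by omega⟩ := by
  have : s = Fin.natAdd a ⟨(s : ℕ) - a, by omega⟩ := by ext; simp; omega
  conv_lhs => rw [this]
  rw [Fin.append_right]

lemma runP_of_lt (p : ℝ) {v T : ℕ} (h : T < v) : runP p v T = 0 := by
  unfold runP
  refine Finset.sum_eq_zero fun g _ => ?_
  rw [if_neg]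
  rintro ⟨t, ht, -⟩
  omega

lemma runP_self (p : ℝ) (v : ℕ) : runP p v v = p ^ v := by
  unfold runP
  have key : ∀ g : Fin v → Bool, rpB v v v g ↔ g = fun _ => true := by
    intro g
    constructor
    · rintro ⟨t, ht, hw⟩
      funext s
      exact hw s (by omega) (by omega)
    · rintro rfl
      exact ⟨0, by omega, fun s _ _ => rfl⟩
  have h1 : (∑ g : Fin v → Bool, if rpB v v v g then wt p g else 0)
      = ∑ g : Fin v → Bool, if g = (fun _ => true) then wt p g else 0 := by
    refine Finset.sum_congr rfl fun g _ => ?_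
    by_cases hg : rpB v v v g
    · rw [if_pos hg, if_pos ((key g).mp hg)]
    · rw [if_neg hg, if_neg (fun hh => hg ((key g).mpr hh))]
  rw [h1, Finset.sum_ite_eq' Finset.univ (fun _ : Fin v => true) (wt p)]
  simp [wt_const_true]

lemma noRun_sum (p : ℝ) (v T : ℕ) :
    ∑ h : Fin T → Bool, (if ¬ rpB v T T h then wt p h else 0) = 1 - runP p v T := by
  have : ∀ h : Fin T → Bool,
      (if ¬ rpB v T T h then wt p h else 0) = wt p h - (if rpB v T T h then wt p h else 0) := by
    intro h; by_cases hP : rpB v T T h <;> simp [hP]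
  rw [Finset.sum_congr rfl fun h _ => this h, Finset.sum_sub_distrib, sum_wt]
  rfl

lemma sumA (p : ℝ) (v n : ℕ) :
    (∑ g : Fin (n + 1 + v) → Bool, if rpB v (n + v) (n + 1 + v) g then wt p g else 0)
      = runP p v (n + v) := by
  have e : (n + v) + 1 = n + 1 + v := by omega
  rw [← sum_castFun e (F := fun g => if rpB v (n + v) (n + 1 + v) g then wt p g else 0)]
  have step1 : ∀ g : Fin ((n + v) + 1) → Bool,
      (if rpB v (n + v) (n + 1 + v) (castFun e g) then wt p (castFun e g) else 0)
        = (if rpB v (n + v) ((n + v) + 1) g then wt p g else 0) := by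
    intro g
    rw [wt_castFun]
    by_cases hP : rpB v (n + v) ((n + v) + 1) g
    · rw [if_pos ((rpB_castFun e g).mpr hP), if_pos hP]
    · rw [if_neg (fun hh => hP ((rpB_castFun e g).mp hh)), if_neg hP]
  rw [Finset.sum_congr rfl fun g _ => step1 g]
  rw [sum_append (a := n + v) (b := 1)
    (F := fun g => if rpB v (n + v) ((n + v) + 1) g then wt p g else 0)]
  have key : ∀ (h : Fin (n + v) → Bool) (c : Fin 1 → Bool),
      rpB v (n + v) ((n + v) + 1) (Fin.append h c) ↔ rpB v (n + v) (n + v) h := by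
    intro h c
    constructor
    · rintro ⟨t, ht, hw⟩
      refine ⟨t, ht, fun s hs1 hs2 => ?_⟩
      have hlt : ((Fin.castAdd 1 s : Fin ((n + v) + 1)) : ℕ) = (s : ℕ) := by simp
      have := hw (Fin.castAdd 1 s) (by omega) (by omega)
      rwa [Fin.append_left] at this
    · rintro ⟨t, ht, hw⟩
      refine ⟨t, ht, fun s hs1 hs2 => ?_⟩
      have hlt : (s : ℕ) < n + v := by omega
      rw [append_eval_lt h c s hlt]
      exact hw ⟨(s : ℕ), hlt⟩ hs1 hs2
  have step2 : ∀ h : Fin (n + v) → Bool,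
      (∑ c : Fin 1 → Bool,
        if rpB v (n + v) ((n + v) + 1) (Fin.append h c) then wt p (Fin.append h c) else 0)
        = (if rpB v (n + v) (n + v) h then wt p h else 0) := by
    intro h
    by_cases hP : rpB v (n + v) (n + v) h
    · rw [if_pos hP]
      have : ∀ c : Fin 1 → Bool,
          (if rpB v (n + v) ((n + v) + 1) (Fin.append h c) then wt p (Fin.append h c) else 0)
            = wt p h * wt p c := by
        intro c
        rw [if_pos ((key h c).mpr hP), wt_append]
      rw [Finset.sum_congr rfl fun c _ => this c, ← Finset.mul_sum, sum_wt, mul_one]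
    · rw [if_neg hP]
      refine Finset.sum_eq_zero fun c _ => ?_
      rw [if_neg (fun hh => hP ((key h c).mp hh))]
  rw [Finset.sum_congr rfl fun h _ => step2 h]
  rfl

lemma sumB (p : ℝ) (v n : ℕ) (hv : 1 ≤ v) :
    (∑ g : Fin (n + 1 + v) → Bool,
        if rpB v (n + 1 + v) (n + 1 + v) g ∧ ¬ rpB v (n + v) (n + 1 + v) g then wt p g else 0)
      = (1 - runP p v n) * (1 - p) * p ^ v := by
  rw [sum_append (a := n + 1) (b := v)
    (F := fun g => if rpB v (n + 1 + v) (n + 1 + v) g ∧ ¬ rpB v (n + v) (n + 1 + v) g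
      then wt p g else 0)]
  rw [sum_append (a := n) (b := 1)
    (F := fun h2 => ∑ k : Fin v → Bool,
      if rpB v (n + 1 + v) (n + 1 + v) (Fin.append h2 k) ∧
          ¬ rpB v (n + v) (n + 1 + v) (Fin.append h2 k)
        then wt p (Fin.append h2 k) else 0)]
  -- evaluation lemmas for the double append
  have e1 : ∀ (h : Fin n → Bool) (c : Fin 1 → Bool) (k : Fin v → Bool)
      (s : Fin (n + 1 + v)) (hs : (s : ℕ) < n),
      Fin.append (Fin.append h c) k s = h ⟨(s : ℕ), hs⟩ := by
    intro h c k s hs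
    rw [append_eval_lt (Fin.append h c) k s (by omega)]
    rw [append_eval_lt h c _ (by simpa using hs)]
  have e2 : ∀ (h : Fin n → Bool) (c : Fin 1 → Bool) (k : Fin v → Bool)
      (s : Fin (n + 1 + v)) (hs : (s : ℕ) = n),
      Fin.append (Fin.append h c) k s = c ⟨0, by omega⟩ := by
    intro h c k s hs
    rw [append_eval_lt (Fin.append h c) k s (by omega)]
    rw [append_eval_ge h c _ (by simp [hs])]
    congr 1
    ext
    simp [hs]
  have e3 : ∀ (h : Fin n → Bool) (c : Fin 1 → Bool) (k : Fin v → Bool)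
      (s : Fin (n + 1 + v)) (hs : n + 1 ≤ (s : ℕ)),
      Fin.append (Fin.append h c) k s = k ⟨(s : ℕ) - (n + 1), by omega⟩ := by
    intro h c k s hs
    rw [append_eval_ge (Fin.append h c) k s hs]
  -- the key equivalence
  have key : ∀ (h : Fin n → Bool) (c : Fin 1 → Bool) (k : Fin v → Bool),
      (rpB v (n + 1 + v) (n + 1 + v) (Fin.append (Fin.append h c) k) ∧
        ¬ rpB v (n + v) (n + 1 + v) (Fin.append (Fin.append h c) k))
      ↔ (¬ rpB v n n h ∧ c = (fun _ => false) ∧ k = (fun _ => true)) := by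
    intro h c k
    constructor
    · rintro ⟨⟨t, ht, hw⟩, hno⟩
      have ht1 : n + 1 ≤ t := by
        by_contra hcon
        exact hno ⟨t, by omega, hw⟩
      have ht2 : t = n + 1 := by omega
      subst ht2
      have hk : k = (fun _ => true) := by
        funext j
        have hjv : (j : ℕ) < v := j.isLt
        have hj : ((n + 1 + (j : ℕ)) : ℕ) < n + 1 + v := by omega
        have := hw ⟨n + 1 + (j : ℕ), hj⟩ (by simp only [Fin.val_mk]; omega)
          (by simp only [Fin.val_mk]; omega)
        rw [e3 h c k _ (by simp only [Fin.val_mk]; omega)] at this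
        convert this using 2
        ext
        simp
      refine ⟨?_, ?_, hk⟩
      · rintro ⟨t', ht', hw'⟩
        refine hno ⟨t', by omega, fun s hs1 hs2 => ?_⟩
        have hsn : (s : ℕ) < n := by omega
        rw [e1 h c k s hsn]
        exact hw' ⟨(s : ℕ), hsn⟩ hs1 hs2
      · funext j
        by_contra hcj
        have hcj' : c j = true := by
          cases hcjv : c j
          · exact absurd hcjv hcj
          · rfl
        refine hno ⟨n, by omega, fun s hs1 hs2 => ?_⟩
        rcases Nat.eq_or_lt_of_le hs1 with heq | hlt
        · rw [e2 h c k s heq.symm]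
          rw [show (⟨0, by omega⟩ : Fin 1) = j from Subsingleton.elim _ _]
          exact hcj'
        · rw [e3 h c k s (by omega)]
          have := congrFun hk ⟨(s : ℕ) - (n + 1), by omega⟩
          exact this
    · rintro ⟨hh, hc, hk⟩
      constructor
      · refine ⟨n + 1, by omega, fun s hs1 hs2 => ?_⟩
        rw [e3 h c k s hs1, hk]
      · rintro ⟨t, ht, hw⟩
        by_cases hcase : t + v ≤ n
        · refine hh ⟨t, hcase, fun s' hs1 hs2 => ?_⟩
          have hs' : ((s' : ℕ)) < n + 1 + v := by omega
          have := hw ⟨(s' : ℕ), hs'⟩ hs1 hs2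
          rw [e1 h c k _ (by simpa using s'.isLt)] at this
          exact this
        · have htn : t ≤ n := by omega
          have := hw ⟨n, by omega⟩ (by simp only [Fin.val_mk]; omega)
            (by simp only [Fin.val_mk]; omega)
          rw [e2 h c k _ (by simp only [Fin.val_mk]), hc] at this
          simp at this
  -- now compute the sum
  have step : ∀ (h : Fin n → Bool) (c : Fin 1 → Bool) (k : Fin v → Bool),
      (if rpB v (n + 1 + v) (n + 1 + v) (Fin.append (Fin.append h c) k) ∧
          ¬ rpB v (n + v) (n + 1 + v) (Fin.append (Fin.append h c) k)
        then wt p (Fin.append (Fin.append h c) k) else 0)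
      = (if ¬ rpB v n n h then wt p h else 0) *
          (if c = (fun _ => false) then wt p c else 0) *
          (if k = (fun _ => true) then wt p k else 0) := by
    intro h c k
    by_cases hP : (¬ rpB v n n h ∧ c = (fun _ => false) ∧ k = (fun _ => true))
    · rw [if_pos ((key h c k).mpr hP), wt_append, wt_append,
        if_pos hP.1, if_pos hP.2.1, if_pos hP.2.2]
    · rw [if_neg (fun hh => hP ((key h c k).mp hh))]
      rcases not_and_or.mp hP with h1 | h12
      · rw [if_neg h1]; ring
      · rcases not_and_or.mp h12 with h2 | h3
        · rw [if_neg h2]; ring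
        · rw [if_neg h3]; ring
  rw [Finset.sum_congr rfl fun h _ => Finset.sum_congr rfl fun c _ =>
    Finset.sum_congr rfl fun k _ => step h c k]
  simp only [← Finset.sum_mul, ← Finset.mul_sum]
  rw [Finset.sum_ite_eq' Finset.univ (fun _ : Fin 1 => false) (wt p)]
  rw [Finset.sum_ite_eq' Finset.univ (fun _ : Fin v => true) (wt p)]
  rw [noRun_sum]
  simp [wt_const_true, wt_const_false]

lemma runP_rec (p : ℝ) (v n : ℕ) (hv : 1 ≤ v) :
    runP p v (n + 1 + v) = runP p v (n + v) + (1 - p) * p ^ v * (1 - runP p v n) := by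
  have hsplit : ∀ g : Fin (n + 1 + v) → Bool,
      (if rpB v (n + 1 + v) (n + 1 + v) g then wt p g else 0)
        = (if rpB v (n + v) (n + 1 + v) g then wt p g else 0)
          + (if rpB v (n + 1 + v) (n + 1 + v) g ∧ ¬ rpB v (n + v) (n + 1 + v) g
              then wt p g else 0) := by
    intro g
    by_cases h1 : rpB v (n + v) (n + 1 + v) g
    · have h2 : rpB v (n + 1 + v) (n + 1 + v) g := by
        obtain ⟨t, ht, hw⟩ := h1; exact ⟨t, by omega, hw⟩
      simp [h1, h2]
    · simp [h1]
  have : runP p v (n + 1 + v)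
      = (∑ g : Fin (n + 1 + v) → Bool, if rpB v (n + v) (n + 1 + v) g then wt p g else 0)
        + (∑ g : Fin (n + 1 + v) → Bool,
            if rpB v (n + 1 + v) (n + 1 + v) g ∧ ¬ rpB v (n + v) (n + 1 + v) g
              then wt p g else 0) := by
    rw [runP, Finset.sum_congr rfl fun g _ => hsplit g, Finset.sum_add_distrib]
  rw [this, sumA, sumB p v n hv]
  ring

noncomputable def term' (p : ℝ) (v T l : ℕ) : ℝ :=
  (-1 : ℝ) ^ (l + 1) *
    (p * ((T - l * v).choose (l - 1) : ℝ) + ((T - l * v + 1).choose l : ℝ) * (1 - p)) *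
    p ^ (l * v) * (1 - p) ^ (l - 1)

noncomputable def Gf (p : ℝ) (v T : ℕ) : ℝ :=
  ∑ l ∈ Finset.Icc 1 ((T + 1) / (v + 1)),
    (-1 : ℝ) ^ (l + 1) *
      (p + (((T - l * v + 1 : ℕ) : ℝ) / l) * (1 - p)) *
      ((T - l * v).choose (l - 1) : ℝ) * p ^ (l * v) * (1 - p) ^ (l - 1)

lemma term_eq (p : ℝ) (v T l : ℕ) (hl : 1 ≤ l) :
    (-1 : ℝ) ^ (l + 1) *
      (p + (((T - l * v + 1 : ℕ) : ℝ) / l) * (1 - p)) *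
      ((T - l * v).choose (l - 1) : ℝ) * p ^ (l * v) * (1 - p) ^ (l - 1)
    = term' p v T l := by
  have hnat : (T - l * v + 1) * ((T - l * v).choose (l - 1)) = (T - l * v + 1).choose l * l := by
    have h := Nat.add_one_mul_choose_eq (T - l * v) (l - 1)
    rw [show l - 1 + 1 = l from by omega] at h
    exact h
  have keyreal : ((T - l * v + 1 : ℕ) : ℝ) * ((T - l * v).choose (l - 1) : ℝ)
      = ((T - l * v + 1).choose l : ℝ) * (l : ℝ) := by exact_mod_cast hnat
  have hl0 : (l : ℝ) ≠ 0 := by positivity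
  have e1 : (((T - l * v + 1 : ℕ)) : ℝ) / l * ((T - l * v).choose (l - 1) : ℝ)
      = ((T - l * v + 1).choose l : ℝ) := by
    rw [div_mul_eq_mul_div, keyreal]
    field_simp
  have h2 : (p + (((T - l * v + 1 : ℕ) : ℝ) / l) * (1 - p)) * ((T - l * v).choose (l - 1) : ℝ)
      = p * ((T - l * v).choose (l - 1) : ℝ) + ((T - l * v + 1).choose l : ℝ) * (1 - p) := by
    linear_combination (1 - p) * e1
  rw [term']
  linear_combination ((-1 : ℝ) ^ (l + 1) * p ^ (l * v) * (1 - p) ^ (l - 1)) * h2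

lemma Gf_eq_term (p : ℝ) (v T : ℕ) :
    Gf p v T = ∑ l ∈ Finset.Icc 1 ((T + 1) / (v + 1)), term' p v T l := by
  refine Finset.sum_congr rfl fun l hl => ?_
  exact term_eq p v T l (Finset.mem_Icc.mp hl).1

lemma term_vanish (p : ℝ) (v T l : ℕ) (hl : 2 ≤ l) (hbig : T + 2 ≤ l * (v + 1)) :
    term' p v T l = 0 := by
  have hexp : l * (v + 1) = l * v + l := by ring
  have h1 : (T - l * v).choose (l - 1) = 0 := by
    by_cases hc : l * v ≤ T
    · exact Nat.choose_eq_zero_of_lt (by omega)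
    · rw [Nat.sub_eq_zero_of_le (by omega)]
      exact Nat.choose_eq_zero_of_lt (by omega)
  have h2 : (T - l * v + 1).choose l = 0 := by
    by_cases hc : l * v ≤ T
    · exact Nat.choose_eq_zero_of_lt (by omega)
    · rw [Nat.sub_eq_zero_of_le (by omega)]
      exact Nat.choose_eq_zero_of_lt (by omega)
  rw [term', h1, h2]
  push_cast
  ring

lemma Gf_extend (p : ℝ) (v T M : ℕ) (hv : 1 ≤ v) (hvT : v ≤ T)
    (hM : (T + 1) / (v + 1) ≤ M) :
    Gf p v T = ∑ l ∈ Finset.Icc 1 M, term' p v T l := by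
  rw [Gf_eq_term]
  refine Finset.sum_subset (Finset.Icc_subset_Icc_right hM) fun x hx hnx => ?_
  rw [Finset.mem_Icc] at hx
  rw [Finset.mem_Icc, not_and_or] at hnx
  have hxL : (T + 1) / (v + 1) < x := by omega
  have hL1 : 1 ≤ (T + 1) / (v + 1) := (Nat.one_le_div_iff (by omega)).mpr (by omega)
  have hbig : T + 1 < x * (v + 1) := (Nat.div_lt_iff_lt_mul (by omega)).mp hxL
  exact term_vanish p v T x (by omega) (by omega)

lemma Gf_lt (p : ℝ) {v T : ℕ} (h : T < v) : Gf p v T = 0 := by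
  rw [Gf, Nat.div_eq_of_lt (by omega)]
  simp

lemma Gf_self (p : ℝ) (v : ℕ) : Gf p v v = p ^ v := by
  rw [Gf, Nat.div_self (by omega), Finset.Icc_self, Finset.sum_singleton]
  simp [Nat.sub_self]

lemma term1_diff (p : ℝ) (v n : ℕ) :
    term' p v (n + 1 + v) 1 - term' p v (n + v) 1 = (1 - p) * p ^ v := by
  rw [term', term']
  have h1 : n + 1 + v - 1 * v = n + 1 := by omega
  have h2 : n + v - 1 * v = n := by omega
  rw [h1, h2]
  simp [Nat.choose_one_right]
  push_cast
  ring

lemma key_shift (p : ℝ) (v n j : ℕ) (hv : 1 ≤ v) (hnv : v ≤ n) (hj : 1 ≤ j) :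
    term' p v (n + 1 + v) (j + 1) - term' p v (n + v) (j + 1)
      = -((1 - p) * p ^ v * term' p v n j) := by
  have hexp : (j + 1) * v = j * v + v := by ring
  by_cases hc : j * v ≤ n
  · have s1 : n + 1 + v - (j + 1) * v = (n - j * v) + 1 := by omega
    have s2 : n + v - (j + 1) * v = n - j * v := by omega
    have pas1 : ((n - j * v) + 1).choose j
        = (n - j * v).choose (j - 1) + (n - j * v).choose j := by
      have h := Nat.choose_succ_succ (n - j * v) (j - 1)
      simp only [Nat.succ_eq_add_one] at h
      rwa [show (j - 1) + 1 = j from by omega] at h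
    have pas2 : ((n - j * v) + 2).choose (j + 1)
        = ((n - j * v) + 1).choose j + ((n - j * v) + 1).choose (j + 1) := by
      have h := Nat.choose_succ_succ ((n - j * v) + 1) j
      simpa only [Nat.succ_eq_add_one] using h
    have hq : (1 - p) ^ j = (1 - p) ^ (j - 1) * (1 - p) := by
      rw [← pow_succ, show j - 1 + 1 = j from by omega]
    rw [term', term', term', s1, s2]
    rw [show (n - j * v) + 1 + 1 = (n - j * v) + 2 from by omega]
    rw [show (j + 1) - 1 = j from by omega]
    rw [pas2, pas1, hq, hexp, pow_add]
    push_cast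
    ring
  · have hj2 : 2 ≤ j := by
      by_contra hcon
      have hj1 : j = 1 := by omega
      subst hj1
      simp only [one_mul] at hc
      omega
    have z1 : (n - j * v).choose (j - 1) = 0 := by
      rw [Nat.sub_eq_zero_of_le (by omega)]
      exact Nat.choose_eq_zero_of_lt (by omega)
    have z2 : (n - j * v + 1).choose j = 0 := by
      rw [Nat.sub_eq_zero_of_le (by omega)]
      exact Nat.choose_eq_zero_of_lt (by omega)
    have z3 : (n + 1 + v - (j + 1) * v).choose ((j + 1) - 1) = 0 := by
      rw [show n + 1 + v - (j + 1) * v = 0 from by omega]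
      exact Nat.choose_eq_zero_of_lt (by omega)
    have z4 : (n + 1 + v - (j + 1) * v + 1).choose (j + 1) = 0 := by
      rw [show n + 1 + v - (j + 1) * v = 0 from by omega]
      exact Nat.choose_eq_zero_of_lt (by omega)
    have z5 : (n + v - (j + 1) * v).choose ((j + 1) - 1) = 0 := by
      rw [show n + v - (j + 1) * v = 0 from by omega]
      exact Nat.choose_eq_zero_of_lt (by omega)
    have z6 : (n + v - (j + 1) * v + 1).choose (j + 1) = 0 := by
      rw [show n + v - (j + 1) * v = 0 from by omega]
      exact Nat.choose_eq_zero_of_lt (by omega)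
    rw [term', term', term', z1, z2, z3, z4, z5, z6]
    push_cast
    ring

lemma Gf_rec (p : ℝ) (v n : ℕ) (hv : 1 ≤ v) :
    Gf p v (n + 1 + v) = Gf p v (n + v) + (1 - p) * p ^ v * (1 - Gf p v n) := by
  by_cases hnv : n < v
  · have hGn : Gf p v n = 0 := Gf_lt p hnv
    have hL1 : (n + 1 + v + 1) / (v + 1) = 1 := by
      have hle : 1 ≤ (n + 1 + v + 1) / (v + 1) := (Nat.one_le_div_iff (by omega)).mpr (by omega)
      have hlt : (n + 1 + v + 1) / (v + 1) < 2 := (Nat.div_lt_iff_lt_mul (by omega)).mpr (by omega)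
      omega
    have hL2 : (n + v + 1) / (v + 1) = 1 := by
      have hle : 1 ≤ (n + v + 1) / (v + 1) := (Nat.one_le_div_iff (by omega)).mpr (by omega)
      have hlt : (n + v + 1) / (v + 1) < 2 := (Nat.div_lt_iff_lt_mul (by omega)).mpr (by omega)
      omega
    rw [Gf_eq_term, Gf_eq_term, hGn, hL1, hL2, Finset.Icc_self, Finset.sum_singleton,
      Finset.sum_singleton]
    linear_combination term1_diff p v n
  · push_neg at hnv
    have hM : (n + 1 + v + 1) / (v + 1) = (n + 1) / (v + 1) + 1 := by
      rw [show n + 1 + v + 1 = (n + 1) + (v + 1) from by omega,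
        Nat.add_div_right _ (by omega)]
    set M1 := (n + 1) / (v + 1) with hM1def
    have hM1 : 1 ≤ M1 := (Nat.one_le_div_iff (by omega)).mpr (by omega)
    have hN : Gf p v (n + 1 + v) = ∑ l ∈ Finset.Icc 1 (M1 + 1), term' p v (n + 1 + v) l := by
      rw [Gf_eq_term, hM]
    have hP : Gf p v (n + v) = ∑ l ∈ Finset.Icc 1 (M1 + 1), term' p v (n + v) l := by
      refine Gf_extend p v (n + v) (M1 + 1) hv (by omega) ?_
      calc (n + v + 1) / (v + 1) ≤ (n + 1 + v + 1) / (v + 1) := Nat.div_le_div_right (by omega)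
        _ = M1 + 1 := hM
    have hGn : Gf p v n = ∑ l ∈ Finset.Icc 1 M1, term' p v n l := Gf_eq_term p v n
    rw [hN, hP, hGn]
    have split : ∀ f : ℕ → ℝ,
        ∑ l ∈ Finset.Icc 1 (M1 + 1), f l = f 1 + ∑ l ∈ Finset.Icc 2 (M1 + 1), f l := by
      intro f
      have hins : Finset.Icc 1 (M1 + 1) = insert 1 (Finset.Icc 2 (M1 + 1)) := by
        ext x
        simp only [Finset.mem_Icc, Finset.mem_insert]
        omega
      rw [hins, Finset.sum_insert (by simp [Finset.mem_Icc])]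
    have shift : ∀ f : ℕ → ℝ,
        ∑ l ∈ Finset.Icc 2 (M1 + 1), f l = ∑ j ∈ Finset.Icc 1 M1, f (j + 1) := by
      intro f
      rw [show Finset.Icc 2 (M1 + 1) = (Finset.Icc 1 M1).map (addRightEmbedding 1) from by
        rw [Finset.map_add_right_Icc]]
      rw [Finset.sum_map]
      rfl
    rw [split (term' p v (n + 1 + v)), split (term' p v (n + v)),
      shift (term' p v (n + 1 + v)), shift (term' p v (n + v))]
    have hsum : ∑ j ∈ Finset.Icc 1 M1,
          (term' p v (n + 1 + v) (j + 1) - term' p v (n + v) (j + 1))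
        = ∑ j ∈ Finset.Icc 1 M1, -((1 - p) * p ^ v * term' p v n j) :=
      Finset.sum_congr rfl fun j hj =>
        key_shift p v n j hv hnv (Finset.mem_Icc.mp hj).1
    rw [Finset.sum_sub_distrib, Finset.sum_neg_distrib, ← Finset.mul_sum] at hsum
    have h1 := term1_diff p v n
    linarith [hsum, h1]

instance hasRun.decidablePred (T v : ℕ) : DecidablePred (· ∈ hasRun T v) :=
  fun g => decidable_of_iff (rpB v T T g) Iff.rfl

lemma runP_eq_Gf (p : ℝ) (v : ℕ) (hv : 1 ≤ v) (T : ℕ) : runP p v T = Gf p v T := by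
  induction T using Nat.strong_induction_on with
  | _ T ih =>
    rcases lt_trichotomy T v with h | h | h
    · rw [runP_of_lt p h, Gf_lt p h]
    · subst h
      rw [runP_self, Gf_self]
    · obtain ⟨n, rfl⟩ : ∃ n, T = n + 1 + v := ⟨T - v - 1, by omega⟩
      rw [runP_rec p v n hv, Gf_rec p v n hv, ih (n + v) (by omega), ih n (by omega)]

/-- de Moivre: for `T` independent Bernoulli(p) trials, the probability of a
run of at least `v` consecutive successes equals
`Σ_{l=1}^{⌊(T+1)/(v+1)⌋} (−1)^{l+1} [p + ((T−lv+1)/l)(1−p)] C(T−lv, l−1) p^{lv} (1−p)^{l−1}`. -/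
theorem stmt_6 (T v : ℕ) (hv : 1 ≤ v) (p : ℝ) (hp0 : 0 ≤ p) (hp1 : p ≤ 1) :
    (bernoulliSeq T (ENNReal.ofReal p) (ENNReal.ofReal_le_one.mpr hp1) (hasRun T v)).toReal =
      ∑ l ∈ Finset.Icc 1 ((T + 1) / (v + 1)),
        (-1 : ℝ) ^ (l + 1) *
          (p + (((T - l * v + 1 : ℕ) : ℝ) / l) * (1 - p)) *
          ((T - l * v).choose (l - 1) : ℝ) * p ^ (l * v) * (1 - p) ^ (l - 1) := by
  have h1 := part1 T p hp0 hp1 (hasRun T v)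
  rw [h1, Finset.sum_filter]
  have h2 : (∑ g : Fin T → Bool, if g ∈ hasRun T v then wt p g else 0) = runP p v T := by
    refine Finset.sum_congr rfl fun g _ => ?_
    by_cases hg : rpB v T T g
    · rw [if_pos (show g ∈ hasRun T v from hg), if_pos hg]
    · rw [if_neg (show ¬g ∈ hasRun T v from hg), if_neg hg]
  rw [h2, runP_eq_Gf p v hv T]
  rfl
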